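/- Fano inequality for arbitrary relations (finite case): let X, Y, X̂ be random variables on a finite probability space forming a Markov chain X → Y → X̂, and let R be any subset of range(X) × range(X̂). Suppose 0 ≤ p_min < 1, 0 < p_max ≤ 1, p_min + p_max < 1, p_min ≤ inf_{x̂} P((X, x̂) ∈ R) and p_max ≥ sup_{x̂} P((X, x̂) ∈ R). Then, with E the event (X, X̂) ∈ R, P(E) ≤ (I(X; X̂) + h(P(E)) + log(1 - p_min)) / log((1 - p_min)/p_max). -/

import Mathlib

open Finset

open Classical in
noncomputable def pr {Ω : Type*} [Fintype Ω] (μ : Ω → ℝ) (p : Ω → Prop) : ℝ :=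
  ∑ ω ∈ Finset.univ.filter p, μ ω

def IsPMF {Ω : Type*} [Fintype Ω] (μ : Ω → ℝ) : Prop :=
  (∀ ω, 0 ≤ μ ω) ∧ ∑ ω, μ ω = 1

noncomputable def mutInfo {Ω A B : Type*} [Fintype Ω] [Fintype A] [Fintype B]
    (μ : Ω → ℝ) (X : Ω → A) (Y : Ω → B) : ℝ :=
  ∑ a : A, ∑ b : B, pr μ (fun ω => X ω = a ∧ Y ω = b) *
    Real.log (pr μ (fun ω => X ω = a ∧ Y ω = b) /
      (pr μ (fun ω => X ω = a) * pr μ (fun ω => Y ω = b)))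

noncomputable def ent {Ω A : Type*} [Fintype Ω] [Fintype A] (μ : Ω → ℝ) (X : Ω → A) : ℝ :=
  -∑ a : A, pr μ (fun ω => X ω = a) * Real.log (pr μ (fun ω => X ω = a))

noncomputable def condEnt {Ω A B : Type*} [Fintype Ω] [Fintype A] [Fintype B]
    (μ : Ω → ℝ) (X : Ω → A) (Y : Ω → B) : ℝ :=
  ent μ (fun ω => (X ω, Y ω)) - ent μ Y

noncomputable def binEnt (p : ℝ) : ℝ :=
  -(p * Real.log p) - (1 - p) * Real.log (1 - p)

/-- `X → Y → Z` is a Markov chain: `X` and `Z` are conditionally independent given `Y`. -/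
def MarkovChain {Ω A B C : Type*} [Fintype Ω]
    (μ : Ω → ℝ) (X : Ω → A) (Y : Ω → B) (Z : Ω → C) : Prop :=
  ∀ (a : A) (b : B) (c : C),
    pr μ (fun ω => X ω = a ∧ Y ω = b ∧ Z ω = c) * pr μ (fun ω => Y ω = b) =
      pr μ (fun ω => X ω = a ∧ Y ω = b) * pr μ (fun ω => Y ω = b ∧ Z ω = c)


section aux
variable {Ω : Type*} [Fintype Ω] {μ : Ω → ℝ}

lemma pr_nonneg (h : ∀ ω, 0 ≤ μ ω) (p : Ω → Prop) : 0 ≤ pr μ p :=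
  Finset.sum_nonneg fun ω _ => h ω

lemma pr_congr {p q : Ω → Prop} (h : ∀ ω, p ω ↔ q ω) : pr μ p = pr μ q := by
  classical
  unfold pr
  exact Finset.sum_congr (Finset.filter_congr (fun ω _ => by simp [h ω])) fun _ _ => rfl

lemma pr_mono (h : ∀ ω, 0 ≤ μ ω) {p q : Ω → Prop} (hpq : ∀ ω, p ω → q ω) :
    pr μ p ≤ pr μ q := by
  classical
  unfold pr
  refine Finset.sum_le_sum_of_subset_of_nonneg ?_ (fun ω _ _ => h ω)
  intro ω hω
  simp only [Finset.mem_filter, Finset.mem_univ, true_and] at *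
  exact hpq ω hω

lemma pr_fiber_sum {D : Type*} [Fintype D] [DecidableEq D] (f : Ω → D) (s : Finset D) :
    ∑ z ∈ s, pr μ (fun ω => f ω = z) = pr μ (fun ω => f ω ∈ s) := by
  classical
  unfold pr
  simp only [Finset.sum_filter]
  rw [Finset.sum_comm]
  refine Finset.sum_congr rfl fun ω _ => ?_
  convert Finset.sum_ite_eq s (f ω) (fun _ => μ ω) using 2; congr!

lemma pr_true (h : ∑ ω, μ ω = 1) : pr μ (fun _ => True) = 1 := by
  classical
  unfold pr
  simpa using h

end aux

lemma log_sum_ineq {ι : Type*} (s : Finset ι) (p q : ι → ℝ)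
    (hp : ∀ i ∈ s, 0 ≤ p i) (hq : ∀ i ∈ s, 0 ≤ q i) (h0 : ∀ i ∈ s, q i = 0 → p i = 0) :
    (∑ i ∈ s, p i) * Real.log ((∑ i ∈ s, p i) / (∑ i ∈ s, q i)) ≤
      ∑ i ∈ s, p i * Real.log (p i / q i) := by
  set P := ∑ i ∈ s, p i with hP
  set Q := ∑ i ∈ s, q i with hQ
  rcases eq_or_lt_of_le (Finset.sum_nonneg hq : (0:ℝ) ≤ Q) with hQ0 | hQpos
  · -- Q = 0 : all q_i = 0, all p_i = 0
    have hq0 : ∀ i ∈ s, q i = 0 :=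
      (Finset.sum_eq_zero_iff_of_nonneg hq).mp hQ0.symm
    have hp0 : ∀ i ∈ s, p i = 0 := fun i hi => h0 i hi (hq0 i hi)
    have hP0 : P = 0 := Finset.sum_eq_zero hp0
    rw [hP0, Finset.sum_eq_zero fun i hi => by rw [hp0 i hi, zero_mul], zero_mul]
  · have hQ0 : Q ≠ 0 := hQpos.ne'
    have key := Real.convexOn_mul_log.map_sum_le (t := s)
      (w := fun i => q i / Q) (p := fun i => p i / q i)
      (fun i _ => div_nonneg (hq i ‹_›) hQpos.le)
      (by rw [← Finset.sum_div, div_self hQpos.ne'])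
      (fun i hi => Set.mem_Ici.mpr (div_nonneg (hp i hi) (hq i hi)))
    have hsum : ∑ i ∈ s, (q i / Q) • (p i / q i) = P / Q := by
      rw [hP, Finset.sum_div]
      refine Finset.sum_congr rfl fun i hi => ?_
      rcases eq_or_ne (q i) 0 with h | h
      · simp [h, h0 i hi h]
      · rw [smul_eq_mul, div_mul_div_comm, mul_comm (q i) (p i), mul_div_mul_right _ _ h]
    rw [hsum] at key
    have key2 : Q * ((P / Q) * Real.log (P / Q)) ≤
        Q * ∑ i ∈ s, (q i / Q) • ((p i / q i) * Real.log (p i / q i)) :=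
      mul_le_mul_of_nonneg_left key hQpos.le
    calc P * Real.log (P / Q) = Q * ((P / Q) * Real.log (P / Q)) := by
          field_simp
      _ ≤ Q * ∑ i ∈ s, (q i / Q) • ((p i / q i) * Real.log (p i / q i)) := key2
      _ = ∑ i ∈ s, p i * Real.log (p i / q i) := by
          rw [Finset.mul_sum]
          refine Finset.sum_congr rfl fun i hi => ?_
          rcases eq_or_ne (q i) 0 with h | h
          · simp [h, h0 i hi h]
          · simp only [smul_eq_mul]
            field_simp

lemma step_ineq {p q r : ℝ} (hp : 0 ≤ p) (hq : 0 ≤ q) (hq0 : q = 0 → p = 0)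
    (hqr : q ≤ r) (hr : 0 < r) :
    p * Real.log (p / r) ≤ p * Real.log (p / q) := by
  rcases eq_or_lt_of_le hp with hp0 | hppos
  · rw [← hp0]; simp
  · have hqpos : 0 < q := by
      rcases eq_or_lt_of_le hq with h | h
      · exact absurd (hq0 h.symm) (by linarith)
      · exact h
    refine mul_le_mul_of_nonneg_left (Real.log_le_log (div_pos hppos hr) ?_) hp
    exact div_le_div_of_nonneg_left hppos.le hqpos hqr

lemma pr_false {Ω : Type*} [Fintype Ω] {μ : Ω → ℝ} {p : Ω → Prop} (h : ∀ ω, ¬ p ω) :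
    pr μ p = 0 := by
  classical
  unfold pr
  rw [Finset.filter_false_of_mem (fun ω _ => h ω), Finset.sum_empty]

theorem fano_arbitrary_relations {Ω A B C : Type*} [Fintype Ω] [Fintype A] [Fintype B] [Fintype C]
    [DecidableEq A] [DecidableEq C]
    (μ : Ω → ℝ) (hμ : IsPMF μ) (X : Ω → A) (Y : Ω → B) (Xh : Ω → C)
    (hMC : MarkovChain μ X Y Xh) (R : Finset (A × C))
    (pmin pmax : ℝ) (hmin0 : 0 ≤ pmin) (hmin1 : pmin < 1) (hmax0 : 0 < pmax) (hmax1 : pmax ≤ 1)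
    (hsum : pmin + pmax < 1)
    (hmin : ∀ ω₀ : Ω, pmin ≤ pr μ (fun ω => (X ω, Xh ω₀) ∈ R))
    (hmax : ∀ ω₀ : Ω, pr μ (fun ω => (X ω, Xh ω₀) ∈ R) ≤ pmax) :
    pr μ (fun ω => (X ω, Xh ω) ∈ R) ≤
      (mutInfo μ X Xh + binEnt (pr μ (fun ω => (X ω, Xh ω) ∈ R)) + Real.log (1 - pmin)) /
        Real.log ((1 - pmin) / pmax) := by
  classical
  obtain ⟨hμ0, hμ1⟩ := hμ
  have hpmax1 : pmax < 1 := by linarith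
  have h1pmin : 0 < 1 - pmin := by linarith
  set L := Real.log ((1 - pmin) / pmax) with hL
  have hLpos : 0 < L := by
    rw [hL]
    apply Real.log_pos
    rw [lt_div_iff₀ hmax0]; linarith
  set J : A × C → ℝ := fun z => pr μ (fun ω => X ω = z.1 ∧ Xh ω = z.2) with hJdef
  set PA : A → ℝ := fun a => pr μ (fun ω => X ω = a) with hPAdef
  set PC : C → ℝ := fun c => pr μ (fun ω => Xh ω = c) with hPCdef
  set Rf : Finset (A × C) := Finset.univ.filter (· ∈ R) with hRf
  set p := pr μ (fun ω => (X ω, Xh ω) ∈ R) with hpdef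
  set q := ∑ z ∈ Rf, PA z.1 * PC z.2 with hqdef
  have hJnn : ∀ z, 0 ≤ J z := fun z => pr_nonneg hμ0 _
  have hPAnn : ∀ a, 0 ≤ PA a := fun a => pr_nonneg hμ0 _
  have hPCnn : ∀ c, 0 ≤ PC c := fun c => pr_nonneg hμ0 _
  -- sums of J over finsets of pairs
  have hJs : ∀ s : Finset (A × C), ∑ z ∈ s, J z = pr μ (fun ω => (X ω, Xh ω) ∈ s) := by
    intro s
    rw [← pr_fiber_sum (fun ω => (X ω, Xh ω)) s]
    exact Finset.sum_congr rfl fun z _ => pr_congr fun ω => by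
      simp [Prod.ext_iff]
  have hpRf : ∑ z ∈ Rf, J z = p := by
    rw [hJs Rf, hpdef]
    exact pr_congr fun ω => by simp [hRf]
  have htot : ∑ z : A × C, J z = 1 := by
    rw [hJs Finset.univ]
    rw [pr_congr (q := fun _ => True) (fun ω => by simp)]
    exact pr_true hμ1
  have hpRc : ∑ z ∈ Finset.univ \ Rf, J z = 1 - p := by
    rw [Finset.sum_sdiff_eq_sub (Finset.subset_univ Rf), htot, hpRf]
  -- marginals
  have hPA1 : ∑ a, PA a = 1 := by
    rw [hPAdef, pr_fiber_sum X Finset.univ,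
      pr_congr (q := fun _ => True) (fun ω => by simp)]
    exact pr_true hμ1
  have hPC1 : ∑ c, PC c = 1 := by
    rw [hPCdef, pr_fiber_sum Xh Finset.univ,
      pr_congr (q := fun _ => True) (fun ω => by simp)]
    exact pr_true hμ1
  have hq1 : ∑ z : A × C, PA z.1 * PC z.2 = 1 := by
    rw [Fintype.sum_prod_type, ← Finset.sum_mul_sum, hPA1, hPC1, one_mul]
  have hqRc : ∑ z ∈ Finset.univ \ Rf, PA z.1 * PC z.2 = 1 - q := by
    rw [Finset.sum_sdiff_eq_sub (Finset.subset_univ Rf), hq1, hqdef]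
  -- zero propagation
  have hJ0 : ∀ z : A × C, PA z.1 * PC z.2 = 0 → J z = 0 := by
    intro z h
    have h1 : J z ≤ PA z.1 := pr_mono hμ0 fun ω hw => hw.1
    have h2 : J z ≤ PC z.2 := pr_mono hμ0 fun ω hw => hw.2
    rcases mul_eq_zero.mp h with h' | h'
    · exact le_antisymm (h' ▸ h1) (hJnn z)
    · exact le_antisymm (h' ▸ h2) (hJnn z)
  -- q in [pmin, pmax]
  have hgalt : ∀ c : C, pr μ (fun ω => (X ω, c) ∈ R) =
      ∑ a ∈ Finset.univ.filter (fun a => (a, c) ∈ R), PA a := by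
    intro c
    rw [pr_congr (q := fun ω => X ω ∈ Finset.univ.filter (fun a => (a, c) ∈ R))
      (fun ω => by simp)]
    exact (pr_fiber_sum X _).symm
  have hqalt : q = ∑ c, PC c * pr μ (fun ω => (X ω, c) ∈ R) := by
    rw [hqdef, hRf, Finset.sum_filter, Fintype.sum_prod_type, Finset.sum_comm]
    refine Finset.sum_congr rfl fun c _ => ?_
    rw [hgalt c, Finset.mul_sum, Finset.sum_filter]
    exact Finset.sum_congr rfl fun a _ => by
      by_cases h : (a, c) ∈ R <;> simp [h, mul_comm]
  have hrange : ∀ c : C, PC c ≠ 0 → ∃ ω₀, Xh ω₀ = c := by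
    intro c hc
    by_contra hcon
    push_neg at hcon
    exact hc (pr_false hcon)
  have hq_le : q ≤ pmax := by
    rw [hqalt]
    calc ∑ c, PC c * pr μ (fun ω => (X ω, c) ∈ R) ≤ ∑ c, PC c * pmax := by
          refine Finset.sum_le_sum fun c _ => ?_
          rcases eq_or_ne (PC c) 0 with h | h
          · rw [h, zero_mul, zero_mul]
          · obtain ⟨ω₀, hω₀⟩ := hrange c h
            have := hmax ω₀
            rw [hω₀] at this
            exact mul_le_mul_of_nonneg_left this (hPCnn c)
      _ = pmax := by rw [← Finset.sum_mul, hPC1, one_mul]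
  have hq_ge : pmin ≤ q := by
    rw [hqalt]
    calc pmin = ∑ c, PC c * pmin := by rw [← Finset.sum_mul, hPC1, one_mul]
      _ ≤ ∑ c, PC c * pr μ (fun ω => (X ω, c) ∈ R) := by
          refine Finset.sum_le_sum fun c _ => ?_
          rcases eq_or_ne (PC c) 0 with h | h
          · rw [h, zero_mul, zero_mul]
          · obtain ⟨ω₀, hω₀⟩ := hrange c h
            have := hmin ω₀
            rw [hω₀] at this
            exact mul_le_mul_of_nonneg_left this (hPCnn c)
  have hq0 : 0 ≤ q := Finset.sum_nonneg fun z _ => mul_nonneg (hPAnn _) (hPCnn _)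
  have hq0p : q = 0 → p = 0 := by
    intro h
    rw [← hpRf]
    refine Finset.sum_eq_zero fun z hz => ?_
    exact hJ0 z ((Finset.sum_eq_zero_iff_of_nonneg
      (fun z _ => mul_nonneg (hPAnn _) (hPCnn _))).mp h z hz)
  have hp0 : 0 ≤ p := pr_nonneg hμ0 _
  have hp1 : p ≤ 1 := by
    have h := pr_mono hμ0 (p := fun ω => (X ω, Xh ω) ∈ R) (q := fun _ => True)
      (fun ω _ => trivial)
    rwa [pr_true hμ1] at h
  -- mutual information as a sum over pairs
  have hMI : mutInfo μ X Xh = ∑ z : A × C, J z * Real.log (J z / (PA z.1 * PC z.2)) := by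
    rw [mutInfo, Fintype.sum_prod_type]
  -- log-sum inequalities
  have hls1 : p * Real.log (p / q) ≤
      ∑ z ∈ Rf, J z * Real.log (J z / (PA z.1 * PC z.2)) := by
    have h := log_sum_ineq Rf (fun z => J z) (fun z => PA z.1 * PC z.2)
      (fun z _ => hJnn z) (fun z _ => mul_nonneg (hPAnn _) (hPCnn _))
      (fun z _ hz => hJ0 z hz)
    rwa [hpRf, ← hqdef] at h
  have hls2 : (1 - p) * Real.log ((1 - p) / (1 - q)) ≤
      ∑ z ∈ Finset.univ \ Rf, J z * Real.log (J z / (PA z.1 * PC z.2)) := by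
    have h := log_sum_ineq (Finset.univ \ Rf) (fun z => J z) (fun z => PA z.1 * PC z.2)
      (fun z _ => hJnn z) (fun z _ => mul_nonneg (hPAnn _) (hPCnn _))
      (fun z _ hz => hJ0 z hz)
    rwa [hpRc, hqRc] at h
  have hsplit : ∑ z : A × C, J z * Real.log (J z / (PA z.1 * PC z.2)) =
      (∑ z ∈ Rf, J z * Real.log (J z / (PA z.1 * PC z.2))) +
        ∑ z ∈ Finset.univ \ Rf, J z * Real.log (J z / (PA z.1 * PC z.2)) := by
    rw [Finset.sum_sdiff_eq_sub (Finset.subset_univ Rf)]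
    ring
  have hstep1 : p * Real.log (p / pmax) ≤ p * Real.log (p / q) :=
    step_ineq hp0 hq0 hq0p hq_le hmax0
  have hstep2 : (1 - p) * Real.log ((1 - p) / (1 - pmin)) ≤
      (1 - p) * Real.log ((1 - p) / (1 - q)) :=
    step_ineq (by linarith) (by linarith) (fun h => by linarith) (by linarith) h1pmin
  have hkey : p * Real.log (p / pmax) + (1 - p) * Real.log ((1 - p) / (1 - pmin)) ≤
      mutInfo μ X Xh := by
    rw [hMI, hsplit]
    linarith
  have hid1 : p * Real.log (p / pmax) = p * Real.log p - p * Real.log pmax := by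
    rcases eq_or_ne p 0 with h | h
    · simp [h]
    · rw [Real.log_div h hmax0.ne']; ring
  have hid2 : (1 - p) * Real.log ((1 - p) / (1 - pmin)) =
      (1 - p) * Real.log (1 - p) - (1 - p) * Real.log (1 - pmin) := by
    rcases eq_or_ne (1 - p) 0 with h | h
    · simp [h]
    · rw [Real.log_div h h1pmin.ne']; ring
  have hLdef : L = Real.log (1 - pmin) - Real.log pmax := by
    rw [hL, Real.log_div h1pmin.ne' hmax0.ne']
  rw [le_div_iff₀ hLpos]
  have hb : binEnt p = -(p * Real.log p) - (1 - p) * Real.log (1 - p) := rfl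
  rw [hLdef, hb]
  nlinarith [hkey, hid1, hid2]
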